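/- Let σ > 0 and ε > 0, and let H(σ,ε) be the 2×2 real matrix with first row (−ε·c·σ + ρ̄ − 1, Ā) and second row ((2ρ̄F₂/F₁)σ − λ₀ρ̄, −σ − λ₀Ā). Then H(σ,ε), viewed as a complex matrix, has an eigenvalue with strictly positive real part if and only if ε < ((2B̄F₂/F₁ + ρ̄ − 1)σ − λ₀Ā) / (c(σ + λ₀Ā)σ). -/

import Mathlib

lemma eig_iff_det (M : Matrix (Fin 2) (Fin 2) ℂ) (μ : ℂ) :
    (∃ v : Fin 2 → ℂ, v ≠ 0 ∧ M.mulVec v = μ • v) ↔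
      (M 0 0 - μ) * (M 1 1 - μ) - M 0 1 * M 1 0 = 0 := by
  have h : ∀ v : Fin 2 → ℂ, (M - μ • 1).mulVec v = M.mulVec v - μ • v := by
    intro v
    rw [Matrix.sub_mulVec, Matrix.smul_mulVec, Matrix.one_mulVec]
  have := (Matrix.exists_mulVec_eq_zero_iff (M := M - μ • (1 : Matrix (Fin 2) (Fin 2) ℂ)))
  rw [Matrix.det_fin_two] at this
  constructor
  · rintro ⟨v, hv, hMv⟩
    have h0 : (M - μ • 1).mulVec v = 0 := by rw [h, hMv, sub_self]
    have := this.mp ⟨v, hv, h0⟩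
    simpa [Matrix.sub_apply, Matrix.smul_apply, Matrix.one_apply] using this
  · intro hdet
    have hdet' : (M - μ • 1) 0 0 * (M - μ • 1) 1 1 - (M - μ • 1) 0 1 * (M - μ • 1) 1 0 = 0 := by
      simpa [Matrix.sub_apply, Matrix.smul_apply, Matrix.one_apply] using hdet
    obtain ⟨v, hv, h0⟩ := this.mpr hdet'
    refine ⟨v, hv, ?_⟩
    rw [h] at h0
    exact sub_eq_zero.mp h0

lemma quad_key (T D : ℝ) (hT : T < 0) :
    (∃ μ : ℂ, 0 < μ.re ∧ μ ^ 2 - (T:ℂ) * μ + (D:ℂ) = 0) ↔ D < 0 := by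
  constructor
  · rintro ⟨μ, hre, heq⟩
    set x := μ.re with hx
    set y := μ.im with hy
    have hRe : x ^ 2 - y ^ 2 - T * x + D = 0 := by
      have := congrArg Complex.re heq
      simpa [pow_two, Complex.mul_re, Complex.mul_im] using this
    have hIm : 2 * x * y - T * y = 0 := by
      have := congrArg Complex.im heq
      simp [pow_two, Complex.mul_re, Complex.mul_im] at this
      linarith
    have hy0 : y = 0 := by
      rcases mul_eq_zero.mp (show y * (2 * x - T) = 0 by linarith) with h | h
      · exact h
      · nlinarith
    nlinarith [sq_nonneg x, mul_pos hre hre]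
  · intro hD
    have hnn : 0 ≤ T ^ 2 - 4 * D := by nlinarith
    set s := Real.sqrt (T ^ 2 - 4 * D) with hs
    have hs2 : s ^ 2 = T ^ 2 - 4 * D := Real.sq_sqrt hnn
    have hsnn : 0 ≤ s := Real.sqrt_nonneg _
    have hgt : -T < s := by nlinarith
    refine ⟨(((T + s) / 2 : ℝ) : ℂ), by simpa using by linarith, ?_⟩
    have hreal : ((T + s) / 2) ^ 2 - T * ((T + s) / 2) + D = 0 := by nlinarith
    have := congrArg (fun r : ℝ => (r : ℂ)) hreal
    push_cast at this ⊢
    linear_combination this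


lemma det_fin_two_map (p q r s : ℝ) (μ : ℂ) :
    (((!![p, q; r, s]).map (fun x : ℝ => (x : ℂ))) 0 0 - μ) *
    (((!![p, q; r, s]).map (fun x : ℝ => (x : ℂ))) 1 1 - μ) -
    ((!![p, q; r, s]).map (fun x : ℝ => (x : ℂ))) 0 1 *
    ((!![p, q; r, s]).map (fun x : ℝ => (x : ℂ))) 1 0
      = μ ^ 2 - ((p + s : ℝ) : ℂ) * μ + ((p * s - q * r : ℝ) : ℂ) := by
  simp [Matrix.map_apply]
  ring

/-- Per-mode instability criterion for the departure-dependent urban crime model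
(Proposition 3.1). -/
theorem departure_mode_instability_iff
    (A0 Bbar lam0 h1 h2 F1 F2 Abar ρbar c σ ε : ℝ)
    (hA0 : 0 < A0) (hB : 0 < Bbar) (hlam : 0 < lam0)
    (hh1 : 0 < h1) (hh2 : 0 < h2) (hF1 : 0 < F1) (hF2 : 0 ≤ F2)
    (hAbar : Abar = A0 + Bbar) (hρbar : ρbar = Bbar / (A0 + Bbar))
    (hc : c = h1 + h2 * Bbar)
    (hσ : 0 < σ) (hε : 0 < ε) :
    (∃ μ : ℂ, 0 < μ.re ∧ ∃ v : Fin 2 → ℂ, v ≠ 0 ∧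
      ((!![-ε * c * σ + ρbar - 1, Abar;
           (2 * ρbar * F2 / F1) * σ - lam0 * ρbar, -σ - lam0 * Abar]).map
        (fun x : ℝ => (x : ℂ))).mulVec v = μ • v) ↔
    ε < ((2 * Bbar * F2 / F1 + ρbar - 1) * σ - lam0 * Abar) /
        (c * (σ + lam0 * Abar) * σ) := by
  have hsum : (0:ℝ) < A0 + Bbar := by linarith
  have hρlt : ρbar < 1 := by
    rw [hρbar, div_lt_one hsum]; linarith
  have hρpos : 0 < ρbar := by
    rw [hρbar]; positivity
  have hcpos : 0 < c := by rw [hc]; positivity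
  have hApos : 0 < Abar := by rw [hAbar]; linarith
  set a : ℝ := -ε * c * σ + ρbar - 1 with ha
  set d : ℝ := -σ - lam0 * Abar with hd
  set b2 : ℝ := (2 * ρbar * F2 / F1) * σ - lam0 * ρbar with hb2
  set T : ℝ := a + d with hTdef
  set D : ℝ := a * d - Abar * b2 with hDdef
  have hT : T < 0 := by
    have : 0 < ε * c * σ := by positivity
    have : 0 < lam0 * Abar := by positivity
    simp only [hTdef, ha, hd]
    nlinarith
  have key : ∀ μ : ℂ, (∃ v : Fin 2 → ℂ, v ≠ 0 ∧
      ((!![-ε * c * σ + ρbar - 1, Abar;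
           (2 * ρbar * F2 / F1) * σ - lam0 * ρbar, -σ - lam0 * Abar]).map
        (fun x : ℝ => (x : ℂ))).mulVec v = μ • v) ↔
      μ ^ 2 - (T:ℂ) * μ + (D:ℂ) = 0 := by
    intro μ
    rw [eig_iff_det, det_fin_two_map]
  refine (exists_congr (fun μ : ℂ => and_congr_right (fun _ : 0 < μ.re => key μ))).trans ?_
  rw [quad_key T D hT]
  have hKpos : 0 < c * (σ + lam0 * Abar) * σ := by positivity
  rw [lt_div_iff₀ hKpos]
  have hDeq : D = ε * (c * (σ + lam0 * Abar) * σ) -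
      ((2 * Bbar * F2 / F1 + ρbar - 1) * σ - lam0 * Abar) := by
    simp only [hDdef, ha, hd, hb2]
    subst hρbar hAbar
    field_simp
    ring
  rw [hDeq]
  constructor <;> intro h <;> linarith
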